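/- Let R and S be finite TRSs over a common finite signature F, let A be a strongly linear interpretation for F such that for every rule l → r ∈ S and every assignment α : V → ℕ the value of l under α is strictly greater than the value of r under α, and assume R is non-duplicating. Define →_{R/S} := →*_S ∘ →_R ∘ →*_S. Then for every term t that is terminating with respect to →_{R∪S}: if every →_{R/S}-derivation starting from t has length at most N, then every →_{R∪S}-derivation starting from t has length at most (1 + WG(A,R))·N + M_A·|t|. -/
import Mathlib


/-- First-order terms over a signature `F` (with arity function `ar`) and variables `V`. -/
inductive Tm (F : Type) (ar : F → ℕ) (V : Type) : Type where
  | var : V → Tm F ar V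
  | fn : (f : F) → (Fin (ar f) → Tm F ar V) → Tm F ar V

namespace Tm

variable {F : Type} {ar : F → ℕ} {V : Type}

/-- The size of a term: the number of occurrences of variables and function symbols. -/
def size : Tm F ar V → ℕ
  | var _ => 1
  | fn _ ts => 1 + ∑ i, (ts i).size

/-- Number of occurrences of the variable `x` in a term. -/
def count [DecidableEq V] (x : V) : Tm F ar V → ℕ
  | var y => if y = x then 1 else 0
  | fn _ ts => ∑ i, (ts i).count x

/-- Application of a substitution to a term. -/
def subst (σ : V → Tm F ar V) : Tm F ar V → Tm F ar V
  | var x => σ x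
  | fn f ts => fn f fun i => (ts i).subst σ

/-- Evaluation of a term in the strongly linear interpretation determined by the
constants `c : F → ℕ` (each `f` is interpreted as `x₁ + ⋯ + xₙ + c f`), under the
assignment `α` for the variables. -/
def evalSLI (c : F → ℕ) (α : V → ℕ) : Tm F ar V → ℕ
  | var x => α x
  | fn f ts => (∑ i, evalSLI c α (ts i)) + c f

end Tm

/-- `R` is a term rewrite system: left-hand sides are not variables and every variable
of a right-hand side occurs in the corresponding left-hand side. -/
def IsTRS {F : Type} {ar : F → ℕ} (R : Set (Tm F ar ℕ × Tm F ar ℕ)) : Prop :=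
  ∀ p ∈ R, (∀ x : ℕ, p.1 ≠ Tm.var x) ∧
    ∀ x : ℕ, 0 < Tm.count x p.2 → 0 < Tm.count x p.1

/-- The rewrite relation of `R`: the closure of the rules under contexts and
substitutions. -/
inductive Rew {F : Type} {ar : F → ℕ} (R : Set (Tm F ar ℕ × Tm F ar ℕ)) :
    Tm F ar ℕ → Tm F ar ℕ → Prop
  | rule {l r} (σ : ℕ → Tm F ar ℕ) : (l, r) ∈ R → Rew R (l.subst σ) (r.subst σ)
  | congr {f} {ts : Fin (ar f) → Tm F ar ℕ} (i) {t'} :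
      Rew R (ts i) t' → Rew R (.fn f ts) (.fn f (Function.update ts i t'))

/-- The relative rewrite relation `→_{R/S} = →*_S ∘ →_R ∘ →*_S`. -/
def RelRew {F : Type} {ar : F → ℕ} (R S : Set (Tm F ar ℕ × Tm F ar ℕ))
    (s t : Tm F ar ℕ) : Prop :=
  ∃ u v : Tm F ar ℕ, Relation.ReflTransGen (Rew S) s u ∧ Rew R u v ∧
    Relation.ReflTransGen (Rew S) v t

/-- A `ρ`-derivation of length `n`: `d 0 → d 1 → ⋯ → d n`. -/
def ChainOf {A : Type} (ρ : A → A → Prop) (n : ℕ) (d : ℕ → A) : Prop :=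
  ∀ i < n, ρ (d i) (d (i + 1))


section Aux

variable {F : Type} {ar : F → ℕ}

open Tm

lemma eval_subst (c : F → ℕ) (α : ℕ → ℕ) (σ : ℕ → Tm F ar ℕ) (u : Tm F ar ℕ) :
    evalSLI c α (u.subst σ) = evalSLI c (fun x => evalSLI c α (σ x)) u := by
  induction u with
  | var x => rfl
  | fn f ts ih => simp [subst, evalSLI, ih]

/-- The finite set of variables of a term. -/
def varsOf : Tm F ar ℕ → Finset ℕ
  | .var x => {x}
  | .fn _ ts => Finset.univ.biUnion fun i => varsOf (ts i)

lemma count_eq_zero {u : Tm F ar ℕ} {x : ℕ} (h : x ∉ varsOf u) : u.count x = 0 := by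
  induction u with
  | var y =>
    simp only [varsOf, Finset.mem_singleton] at h
    simp only [count, if_neg (show ¬ y = x from fun hh => h hh.symm)]
  | fn f ts ih =>
    simp only [varsOf, Finset.mem_biUnion, Finset.mem_univ, true_and, not_exists] at h
    simp only [count, Finset.sum_eq_zero_iff, Finset.mem_univ, true_implies]
    exact fun i => ih i (h i)

lemma eval_decomp (c : F → ℕ) (α : ℕ → ℕ) (u : Tm F ar ℕ) (T : Finset ℕ)
    (hT : varsOf u ⊆ T) :
    evalSLI c α u = evalSLI c (fun _ => 0) u + ∑ x ∈ T, u.count x * α x := by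
  induction u with
  | var y =>
    have hy : y ∈ T := hT (by simp [varsOf])
    simp only [evalSLI, count]
    rw [Finset.sum_eq_single y]
    · simp
    · intro b _ hb
      simp only [count, if_neg (show ¬ y = b from fun hh => hb hh.symm), Nat.zero_mul]
    · intro h; exact absurd hy h
  | fn f ts ih =>
    have hsub : ∀ i, varsOf (ts i) ⊆ T := fun i =>
      (Finset.subset_biUnion_of_mem (fun i => varsOf (ts i)) (Finset.mem_univ i)).trans hT
    simp only [evalSLI, count, Finset.sum_mul]
    rw [Finset.sum_congr rfl (fun i _ => ih i (hsub i)), Finset.sum_add_distrib,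
      Finset.sum_comm]
    omega

lemma eval_le_of_counts (c : F → ℕ) {l r : Tm F ar ℕ} (W : ℕ)
    (h0 : evalSLI c (fun _ => 0) r ≤ evalSLI c (fun _ => 0) l + W)
    (hc : ∀ x, r.count x ≤ l.count x) (α : ℕ → ℕ) :
    evalSLI c α r ≤ evalSLI c α l + W := by
  rw [eval_decomp c α r (varsOf l ∪ varsOf r) Finset.subset_union_right,
      eval_decomp c α l (varsOf l ∪ varsOf r) Finset.subset_union_left]
  have hsum : ∑ x ∈ varsOf l ∪ varsOf r, r.count x * α x ≤
      ∑ x ∈ varsOf l ∪ varsOf r, l.count x * α x :=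
    Finset.sum_le_sum fun x _ => Nat.mul_le_mul_right _ (hc x)
  omega

lemma sum_update_eq (g : Tm F ar ℕ → ℕ) {f : F} (ts : Fin (ar f) → Tm F ar ℕ)
    (i : Fin (ar f)) (t' : Tm F ar ℕ) :
    (∑ j, g (Function.update ts i t' j)) + g (ts i) = (∑ j, g (ts j)) + g t' := by
  have h1 : (fun j => g (Function.update ts i t' j)) =
      Function.update (fun j => g (ts j)) i (g t') := by
    funext j
    by_cases hj : j = i
    · subst hj; simp
    · simp [Function.update_of_ne hj]
  rw [h1, Finset.sum_update_of_mem (Finset.mem_univ i),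
    Finset.sum_eq_sum_sdiff_singleton_add (Finset.mem_univ i) (fun j => g (ts j))]
  omega

lemma rew_S_lt (c : F → ℕ) (S : Finset (Tm F ar ℕ × Tm F ar ℕ))
    (hSdec : ∀ p ∈ S, ∀ α : ℕ → ℕ, Tm.evalSLI c α p.2 < Tm.evalSLI c α p.1)
    {s u : Tm F ar ℕ} (h : Rew (↑S : Set (Tm F ar ℕ × Tm F ar ℕ)) s u) (α : ℕ → ℕ) :
    evalSLI c α u < evalSLI c α s := by
  induction h generalizing α with
  | @rule l r σ hmem =>
    rw [eval_subst, eval_subst]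
    exact hSdec (l, r) hmem _
  | @congr f ts i t' _ ih =>
    have hkey := sum_update_eq (evalSLI c α) ts i t'
    have := ih α
    simp only [evalSLI]
    omega

lemma rew_R_le (c : F → ℕ) (R : Finset (Tm F ar ℕ × Tm F ar ℕ))
    (hnondup : ∀ p ∈ R, ∀ x : ℕ, Tm.count x p.2 ≤ Tm.count x p.1)
    {s u : Tm F ar ℕ} (h : Rew (↑R : Set (Tm F ar ℕ × Tm F ar ℕ)) s u) (α : ℕ → ℕ) :
    evalSLI c α u ≤ evalSLI c α s +
      R.sup (fun p => Tm.evalSLI c (fun _ => 0) p.2 - Tm.evalSLI c (fun _ => 0) p.1) := by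
  induction h generalizing α with
  | @rule l r σ hmem =>
    rw [eval_subst, eval_subst]
    refine eval_le_of_counts (l := l) (r := r) c _ ?_ (fun x => hnondup (l, r) hmem x) _
    have hle0 : Tm.evalSLI c (fun _ => 0) r - Tm.evalSLI c (fun _ => 0) l ≤
        R.sup (fun p => Tm.evalSLI c (fun _ => 0) p.2 - Tm.evalSLI c (fun _ => 0) p.1) := by
      have := Finset.le_sup (f := fun p : Tm F ar ℕ × Tm F ar ℕ =>
        Tm.evalSLI c (fun _ => 0) p.2 - Tm.evalSLI c (fun _ => 0) p.1)
        (Finset.mem_coe.mp hmem)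
      simp only at this
      exact this
    omega
  | @congr f ts i t' _ ih =>
    have hkey := sum_update_eq (evalSLI c α) ts i t'
    have := ih α
    simp only [evalSLI]
    omega

lemma eval_le_size [Fintype F] (c : F → ℕ) (u : Tm F ar ℕ) :
    evalSLI c (fun _ => 0) u ≤ (Finset.univ.sup c) * u.size := by
  induction u with
  | var x => simp [evalSLI]
  | fn f ts ih =>
    have hc : c f ≤ Finset.univ.sup c := Finset.le_sup (Finset.mem_univ f)
    have hsum : ∑ i, evalSLI c (fun _ => 0) (ts i) ≤
        ∑ i, (Finset.univ.sup c) * (ts i).size := Finset.sum_le_sum fun i _ => ih i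
    simp only [evalSLI, size]
    calc (∑ i, evalSLI c (fun _ => 0) (ts i)) + c f
        ≤ (∑ i, (Finset.univ.sup c) * (ts i).size) + Finset.univ.sup c :=
          Nat.add_le_add hsum hc
      _ = (Finset.univ.sup c) * (1 + ∑ i, (ts i).size) := by
          rw [← Finset.mul_sum]; ring

lemma rew_union_cases {R S : Set (Tm F ar ℕ × Tm F ar ℕ)} {s u : Tm F ar ℕ}
    (h : Rew (R ∪ S) s u) : Rew R s u ∨ Rew S s u := by
  induction h with
  | @rule l r σ hmem =>
    rcases hmem with hm | hm
    · exact Or.inl (Rew.rule σ hm)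
    · exact Or.inr (Rew.rule σ hm)
  | @congr f ts i t' _ ih =>
    rcases ih with h | h
    · exact Or.inl (Rew.congr i h)
    · exact Or.inr (Rew.congr i h)

end Aux

/-- Let `R`, `S` be finite TRSs over a common finite signature, `A` a
strongly linear interpretation that strictly orients every rule of `S` (for every
assignment), and `R` non-duplicating.  Then for every `→_{R∪S}`-terminating term `t`:
if every `→_{R/S}`-derivation from `t` has length at most `N`, then every
`→_{R∪S}`-derivation from `t` has length at most `(1 + WG(A,R))·N + M_A·|t|`. -/
theorem relative_to_total_bound {F : Type} [Fintype F] {ar : F → ℕ} (c : F → ℕ)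
    (R S : Finset (Tm F ar ℕ × Tm F ar ℕ))
    (hR : IsTRS (↑R : Set (Tm F ar ℕ × Tm F ar ℕ)))
    (hS : IsTRS (↑S : Set (Tm F ar ℕ × Tm F ar ℕ)))
    (hSdec : ∀ p ∈ S, ∀ α : ℕ → ℕ, Tm.evalSLI c α p.2 < Tm.evalSLI c α p.1)
    (hnondup : ∀ p ∈ R, ∀ x : ℕ, Tm.count x p.2 ≤ Tm.count x p.1)
    (t : Tm F ar ℕ)
    (hterm : ¬ ∃ d : ℕ → Tm F ar ℕ, d 0 = t ∧
      ∀ i, Rew ((↑R : Set (Tm F ar ℕ × Tm F ar ℕ)) ∪ ↑S) (d i) (d (i + 1)))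
    (N : ℕ)
    (hN : ∀ (m : ℕ) (d : ℕ → Tm F ar ℕ), d 0 = t →
      ChainOf (RelRew (↑R : Set (Tm F ar ℕ × Tm F ar ℕ)) ↑S) m d → m ≤ N) :
    ∀ (m : ℕ) (d : ℕ → Tm F ar ℕ), d 0 = t →
      ChainOf (Rew ((↑R : Set (Tm F ar ℕ × Tm F ar ℕ)) ∪ ↑S)) m d →
      m ≤ (1 + R.sup (fun p => Tm.evalSLI c (fun _ => 0) p.2 -
              Tm.evalSLI c (fun _ => 0) p.1)) * N +
           (Finset.univ.sup c) * Tm.size t:= by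
  set W := R.sup (fun p => Tm.evalSLI c (fun _ => 0) p.2 -
      Tm.evalSLI c (fun _ => 0) p.1) with hW
  set M := Finset.univ.sup c with hM
  have key : ∀ (m : ℕ) (d : ℕ → Tm F ar ℕ), d 0 = t →
      ChainOf (Rew ((↑R : Set (Tm F ar ℕ × Tm F ar ℕ)) ∪ ↑S)) m d →
      ∃ (k : ℕ) (e : ℕ → Tm F ar ℕ), e 0 = t ∧
        ChainOf (RelRew (↑R : Set (Tm F ar ℕ × Tm F ar ℕ)) ↑S) k e ∧
        Relation.ReflTransGen (Rew (↑S : Set (Tm F ar ℕ × Tm F ar ℕ))) (e k) (d m) ∧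
        m + Tm.evalSLI c (fun _ => 0) (d m) ≤
          k * (1 + W) + Tm.evalSLI c (fun _ => 0) t := by
    intro m
    induction m with
    | zero =>
      intro d h0 _
      refine ⟨0, fun _ => t, rfl, fun i hi => absurd hi (Nat.not_lt_zero i),
        by rw [h0], by rw [h0]; simp⟩
    | succ m ih =>
      intro d h0 hch
      obtain ⟨k, e, he0, hek, hrt, hle⟩ := ih d h0 (fun i hi => hch i (by omega))
      rcases rew_union_cases (hch m (by omega)) with hr | hs
      · refine ⟨k + 1, fun j => if j ≤ k then e j else d (m + 1), by simp [he0],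
          ?_, ?_, ?_⟩
        · intro i hi
          by_cases hik : i < k
          · simpa [Nat.le_of_lt hik, Nat.succ_le_of_lt hik] using hek i hik
          · have hik' : i = k := by omega
            subst hik'
            simp only [le_refl, if_pos, Nat.lt_irrefl, if_neg (by omega : ¬ i + 1 ≤ i)]
            exact ⟨d m, d (m + 1), hrt, hr, Relation.ReflTransGen.refl⟩
        · simp only [if_neg (by omega : ¬ k + 1 ≤ k)]
          exact Relation.ReflTransGen.refl
        · have hWle := rew_R_le c R hnondup hr (fun _ => 0)
          rw [← hW] at hWle
          have hmul : (k + 1) * (1 + W) = k * (1 + W) + (1 + W) := by ring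
          rw [hmul]
          generalize k * (1 + W) = A at hle ⊢
          omega
      · refine ⟨k, e, he0, hek, hrt.tail hs, ?_⟩
        have hlt := rew_S_lt c S hSdec hs (fun _ => 0)
        generalize k * (1 + W) = A at hle ⊢
        omega
  intro m d h0 hch
  obtain ⟨k, e, he0, hek, _, hle⟩ := key m d h0 hch
  have hk : k ≤ N := hN k e he0 hek
  have hsz : Tm.evalSLI c (fun _ => 0) t ≤ M * t.size := eval_le_size c t
  have h1 : m ≤ k * (1 + W) + Tm.evalSLI c (fun _ => 0) t := by omega
  calc m ≤ k * (1 + W) + Tm.evalSLI c (fun _ => 0) t := h1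
    _ ≤ N * (1 + W) + M * t.size :=
        Nat.add_le_add (Nat.mul_le_mul_right _ hk) hsz
    _ = (1 + W) * N + M * Tm.size t := by ring
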